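/- For any two probability measures P and Q on a measurable space and any integer n ≥ 1, the total variation distance between the n-fold product measures satisfies δ(P^n, Q^n) ≤ 1 - (1 - δ(P,Q))^n. -/

import Mathlib

open MeasureTheory

/-- Total variation distance between two measures:
sup over measurable sets of |P(A) - Q(A)|. -/
noncomputable def tvDist {Ω : Type*} [MeasurableSpace Ω] (P Q : Measure Ω) : ℝ :=
  ⨆ A : {A : Set Ω // MeasurableSet A}, |(P A.1).toReal - (Q A.1).toReal|

private lemma pi_mono_aux {Ω : Type*} [MeasurableSpace Ω] (n : ℕ) {μ ν : Measure Ω}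
    [IsFiniteMeasure μ] [IsFiniteMeasure ν] (h : μ ≤ ν) :
    Measure.pi (fun _ : Fin n => μ) ≤ Measure.pi (fun _ : Fin n => ν) := by
  induction n with
  | zero =>
      rw [Measure.pi_of_empty, Measure.pi_of_empty]
  | succ n ih =>
      refine Measure.le_intro fun s hs _ => ?_
      set e := MeasurableEquiv.piFinSuccAbove (fun _ : Fin (n + 1) => Ω) 0 with he
      have hμe := (measurePreserving_piFinSuccAbove (fun _ : Fin (n + 1) => μ) 0).map_eq
      have hνe := (measurePreserving_piFinSuccAbove (fun _ : Fin (n + 1) => ν) 0).map_eq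
      have hts : MeasurableSet (e.symm ⁻¹' s) := e.symm.measurable hs
      have hpre : e ⁻¹' (e.symm ⁻¹' s) = s := by
        ext x; simp
      have key : ∀ (ρ : Measure Ω) [SigmaFinite ρ],
          Measure.map e (Measure.pi fun _ : Fin (n+1) => ρ)
            = ρ.prod (Measure.pi fun _ : Fin n => ρ) := by
        intro ρ _
        exact (measurePreserving_piFinSuccAbove (fun _ : Fin (n + 1) => ρ) 0).map_eq
      have h1 : Measure.pi (fun _ : Fin (n+1) => μ) s
          = (μ.prod (Measure.pi fun _ : Fin n => μ)) (e.symm ⁻¹' s) := by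
        rw [← key μ, MeasurableEquiv.map_apply, hpre]
      have h2 : Measure.pi (fun _ : Fin (n+1) => ν) s
          = (ν.prod (Measure.pi fun _ : Fin n => ν)) (e.symm ⁻¹' s) := by
        rw [← key ν, MeasurableEquiv.map_apply, hpre]
      rw [h1, h2, Measure.prod_apply hts, Measure.prod_apply hts]
      exact lintegral_mono' h fun x => ih _

theorem stmt0 {Ω : Type*} [MeasurableSpace Ω] (P Q : Measure Ω)
    [IsProbabilityMeasure P] [IsProbabilityMeasure Q] (n : ℕ) (hn : 1 ≤ n) :
    tvDist (Measure.pi fun _ : Fin n => P) (Measure.pi fun _ : Fin n => Q)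
      ≤ 1 - (1 - tvDist P Q) ^ n := by
  classical
  set δ := tvDist P Q with hδdef
  -- basic facts about toReal of probability measures
  have hP1 : ∀ A : Set Ω, (P A).toReal ≤ 1 := fun A => by
    have := prob_le_one (μ := P) (s := A)
    exact ENNReal.toReal_le_of_le_ofReal one_pos.le (by simpa using this)
  have hQ1 : ∀ A : Set Ω, (Q A).toReal ≤ 1 := fun A => by
    have := prob_le_one (μ := Q) (s := A)
    exact ENNReal.toReal_le_of_le_ofReal one_pos.le (by simpa using this)
  have hbdd : BddAbove (Set.range fun A : {A : Set Ω // MeasurableSet A} =>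
      |(P A.1).toReal - (Q A.1).toReal|) := by
    refine ⟨1, ?_⟩
    rintro x ⟨A, rfl⟩
    have h1 := hP1 A.1; have h2 := hQ1 A.1
    have h3 : 0 ≤ (P A.1).toReal := ENNReal.toReal_nonneg
    have h4 : 0 ≤ (Q A.1).toReal := ENNReal.toReal_nonneg
    rw [abs_sub_le_iff]; constructor <;> linarith
  have hδle : ∀ A : Set Ω, MeasurableSet A → |(P A).toReal - (Q A).toReal| ≤ δ := by
    intro A hA
    exact le_ciSup hbdd ⟨A, hA⟩
  have hδ1 : δ ≤ 1 := by
    refine ciSup_le fun A => ?_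
    have h1 := hP1 A.1; have h2 := hQ1 A.1
    have h3 : 0 ≤ (P A.1).toReal := ENNReal.toReal_nonneg
    have h4 : 0 ≤ (Q A.1).toReal := ENNReal.toReal_nonneg
    rw [abs_sub_le_iff]; constructor <;> linarith
  -- Hahn decomposition
  obtain ⟨s, hs, hQP, hPQ⟩ := hahn_decomposition (μ := P) (ν := Q)
  -- common part
  set ν : Measure Ω := P.restrict sᶜ + Q.restrict s with hν
  haveI : IsFiniteMeasure ν := by
    constructor
    rw [hν]
    simp only [Measure.add_apply]
    exact ENNReal.add_lt_top.2 ⟨(Measure.restrict_le_self Set.univ).trans_lt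
      (measure_lt_top P _), (Measure.restrict_le_self Set.univ).trans_lt
      (measure_lt_top Q _)⟩
  have hνP : ν ≤ P := by
    refine Measure.le_intro fun t ht _ => ?_
    rw [hν, Measure.add_apply, Measure.restrict_apply ht, Measure.restrict_apply ht]
    have h1 : Q (t ∩ s) ≤ P (t ∩ s) := hQP _ (ht.inter hs) Set.inter_subset_right
    calc P (t ∩ sᶜ) + Q (t ∩ s) ≤ P (t ∩ sᶜ) + P (t ∩ s) := by gcongr
      _ = P ((t ∩ sᶜ) ∪ (t ∩ s)) := (measure_union (by
            exact (Set.disjoint_left.2 fun x hx hx' => hx.2 hx'.2)) (ht.inter hs)).symm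
      _ ≤ P t := measure_mono (by
            intro x hx; rcases hx with h | h <;> exact h.1)
  have hνQ : ν ≤ Q := by
    refine Measure.le_intro fun t ht _ => ?_
    rw [hν, Measure.add_apply, Measure.restrict_apply ht, Measure.restrict_apply ht]
    have h1 : P (t ∩ sᶜ) ≤ Q (t ∩ sᶜ) := hPQ _ (ht.inter hs.compl) Set.inter_subset_right
    calc P (t ∩ sᶜ) + Q (t ∩ s) ≤ Q (t ∩ sᶜ) + Q (t ∩ s) := by gcongr
      _ = Q ((t ∩ sᶜ) ∪ (t ∩ s)) := (measure_union (by
            exact (Set.disjoint_left.2 fun x hx hx' => hx.2 hx'.2)) (ht.inter hs)).symm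
      _ ≤ Q t := measure_mono (by
            intro x hx; rcases hx with h | h <;> exact h.1)
  -- total mass of ν
  set c : ℝ := (ν Set.univ).toReal with hc
  have hνfin : ν Set.univ ≠ ⊤ := measure_ne_top ν _
  have hcle1 : c ≤ 1 := by
    have : ν Set.univ ≤ P Set.univ := hνP _
    rw [measure_univ (μ := P)] at this
    exact ENNReal.toReal_le_of_le_ofReal one_pos.le (by simpa using this)
  have hc0 : 0 ≤ c := ENNReal.toReal_nonneg
  have hcge : 1 - δ ≤ c := by
    have hνuniv : ν Set.univ = P sᶜ + Q s := by
      rw [hν, Measure.add_apply, Measure.restrict_apply_univ, Measure.restrict_apply_univ]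
    have hPs : (P s).toReal + (P sᶜ).toReal = 1 := by
      rw [← ENNReal.toReal_add (measure_ne_top _ _) (measure_ne_top _ _),
        prob_add_prob_compl hs]
      simp
    have hctr : c = (P sᶜ).toReal + (Q s).toReal := by
      rw [hc, hνuniv, ENNReal.toReal_add (measure_ne_top _ _) (measure_ne_top _ _)]
    have habs := hδle s hs
    rw [abs_sub_le_iff] at habs
    linarith [habs.1]
  -- product measures
  set Pn := Measure.pi fun _ : Fin n => P with hPn
  set Qn := Measure.pi fun _ : Fin n => Q with hQn
  set Nn := Measure.pi fun _ : Fin n => ν with hNn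
  have hNP : Nn ≤ Pn := pi_mono_aux n hνP
  have hNQ : Nn ≤ Qn := pi_mono_aux n hνQ
  have hNfin : ∀ A : Set (Fin n → Ω), Nn A ≠ ⊤ := fun A =>
    ((hNP A).trans_lt (measure_lt_top Pn A)).ne
  have hNuniv : (Nn Set.univ).toReal = c ^ n := by
    rw [hNn, Measure.pi_univ, Finset.prod_const, ENNReal.toReal_pow, hc]
    simp
  -- conclude
  refine ciSup_le fun A => ?_
  obtain ⟨A, hA⟩ := A
  have hPA : (Pn A).toReal + (Pn Aᶜ).toReal = 1 := by
    rw [← ENNReal.toReal_add (measure_ne_top _ _) (measure_ne_top _ _),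
      prob_add_prob_compl hA]
    simp
  have hQA : (Qn A).toReal + (Qn Aᶜ).toReal = 1 := by
    rw [← ENNReal.toReal_add (measure_ne_top _ _) (measure_ne_top _ _),
      prob_add_prob_compl hA]
    simp
  have hNA : (Nn A).toReal + (Nn Aᶜ).toReal = c ^ n := by
    rw [← ENNReal.toReal_add (hNfin _) (hNfin _), measure_add_measure_compl hA, hNuniv]
  have h1 : (Nn A).toReal ≤ (Pn A).toReal :=
    ENNReal.toReal_mono (measure_ne_top _ _) (hNP A)
  have h2 : (Nn Aᶜ).toReal ≤ (Pn Aᶜ).toReal :=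
    ENNReal.toReal_mono (measure_ne_top _ _) (hNP Aᶜ)
  have h3 : (Nn A).toReal ≤ (Qn A).toReal :=
    ENNReal.toReal_mono (measure_ne_top _ _) (hNQ A)
  have h4 : (Nn Aᶜ).toReal ≤ (Qn Aᶜ).toReal :=
    ENNReal.toReal_mono (measure_ne_top _ _) (hNQ Aᶜ)
  have hpow : (1 - δ) ^ n ≤ c ^ n := by
    have h0 : (0:ℝ) ≤ 1 - δ := by linarith
    exact pow_le_pow_left₀ h0 hcge n
  have key : |(Pn A).toReal - (Qn A).toReal| ≤ 1 - c ^ n := by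
    rw [abs_sub_le_iff]
    constructor <;> linarith
  linarith
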